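/- Let G be a finite group, 𝒪 ⊆ G×G a G-stable subset (under the diagonal left-translation action) with irreducible characteristic matrix, ω ∈ Z²(G,μ_n) a 2-cocycle, and A the cocyclic matrix A_{x,y} = K_{x,y}·ω(x⁻¹,y) for (x,y) ∈ 𝒪 (zero elsewhere), where K is G-invariant. Then for every g ∈ G there are diagonal monomial matrices: A = P(g) A Q(g)* with P(g) = diag(ω(x⁻¹,g)*)·p_X(g) and Q(g) = diag(ω(g,g⁻¹y)*)·p_Y(g); i.e., cocyclic matrices are cohomology-developed. -/

import Mathlib

open Matrix

/-- Cocyclic matrices are cohomology-developed.  For a 2-cocycle ω with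
values in μ_n, a G-invariant K, and the cocyclic matrix `A_{x,y} = K_{x,y} ω(x⁻¹, y)`
supported on a G-stable `𝒪` with irreducible characteristic matrix, for every `g` the
monomial matrices `P(g) = diag_x(ω(x⁻¹, g))·p_X(g)` and `Q(g) = diag_y(ω(g, g⁻¹y))·p_Y(g)`
(with `p_X(g), p_Y(g)` the permutation matrices of left translation by `g`) satisfy
`P(g) A Q(g)* = A`. -/
theorem stmt_19 {G : Type*} [Group G] [Fintype G] [DecidableEq G] (n : ℕ) (hn : 0 < n)
    (ω : G → G → ℂ) (hωn : ∀ a b : G, (ω a b) ^ n = 1)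
    (hcoc : ∀ g₁ g₂ g₃ : G, ω g₂ g₃ * ω g₁ (g₂ * g₃) = ω (g₁ * g₂) g₃ * ω g₁ g₂)
    (K : Matrix G G ℂ) (hK : ∀ g x y : G, K (g⁻¹ * x) (g⁻¹ * y) = K x y)
    (O : Set (G × G)) [DecidablePred (· ∈ O)]
    (hO : ∀ (g : G) (p : G × G), p ∈ O → (g * p.1, g * p.2) ∈ O)
    (hirr : ¬ ∃ I₁ J₁ : Set G, I₁.Nonempty ∧ I₁ᶜ.Nonempty ∧ J₁.Nonempty ∧ J₁ᶜ.Nonempty ∧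
        ∀ x y : G, (x, y) ∈ O → (x ∈ I₁ ∧ y ∈ J₁) ∨ (x ∈ I₁ᶜ ∧ y ∈ J₁ᶜ))
    (A : Matrix G G ℂ)
    (hA : ∀ x y : G, A x y = if (x, y) ∈ O then K x y * ω x⁻¹ y else 0) :
    ∀ g : G,
      (Matrix.of fun x x' : G => if x = g * x' then ω x⁻¹ g else 0) * A *
        (Matrix.of fun y y' : G => if y = g * y' then ω g (g⁻¹ * y) else 0)ᴴ = A := by
  intro g
  have hne : ∀ a b : G, ω a b ≠ 0 := by
    intro a b h
    have := hωn a b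
    rw [h, zero_pow hn.ne'] at this
    exact zero_ne_one this
  have hstar : ∀ a b : G, star (ω a b) = (ω a b)⁻¹ := by
    intro a b
    have habs : ‖ω a b‖ ^ n = 1 := by
      rw [← norm_pow, hωn]; simp
    have habs1 : ‖ω a b‖ = 1 := by
      rcases (pow_eq_one_iff_cases.mp habs) with h | h | h
      · omega
      · exact h
      · nlinarith [norm_nonneg (ω a b)]
    exact (Complex.inv_eq_conj habs1).symm
  ext x y'
  rw [Matrix.mul_apply]
  rw [Finset.sum_eq_single (g⁻¹ * y')]
  · rw [Matrix.mul_apply, Finset.sum_eq_single (g⁻¹ * x)]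
    · simp only [Matrix.of_apply, Matrix.conjTranspose_apply]
      rw [if_pos (by group), if_pos (by group), hstar]
      have hω : ω (g⁻¹ * x)⁻¹ (g⁻¹ * y') * ω x⁻¹ g = ω g (g⁻¹ * y') * ω x⁻¹ y' := by
        have h := hcoc x⁻¹ g (g⁻¹ * y')
        rw [show x⁻¹ * g = (g⁻¹ * x)⁻¹ by group,
          show g * (g⁻¹ * y') = y' by group] at h
        exact h.symm
      have hmem : ((g⁻¹ * x, g⁻¹ * y') ∈ O) ↔ ((x, y') ∈ O) := by
        constructor
        · intro h
          have := hO g _ h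
          simpa using this
        · intro h
          exact hO g⁻¹ (x, y') h
      rw [hA, hA, hK g x y']
      by_cases hm : (x, y') ∈ O
      · rw [if_pos (hmem.mpr hm), if_pos hm]
        have ha := hne x⁻¹ g
        have hb := hne g (g⁻¹ * y')
        set a := ω x⁻¹ g with hadef
        set b := ω g (g⁻¹ * y') with hbdef
        set c := ω x⁻¹ y' with hcdef
        set d := ω (g⁻¹ * x)⁻¹ (g⁻¹ * y') with hddef
        rw [mul_inv_eq_iff_eq_mul₀ hb]
        linear_combination K x y' * hω
      · rw [if_neg (fun h => hm (hmem.mp h)), if_neg hm]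
        simp
    · intro b _ hb
      simp only [Matrix.of_apply]
      rw [if_neg (by intro h; apply hb; rw [h]; group)]
      simp
    · intro h; exact absurd (Finset.mem_univ _) h
  · intro b _ hb
    simp only [Matrix.conjTranspose_apply, Matrix.of_apply]
    rw [if_neg (by intro h; apply hb; rw [h]; group)]
    simp
  · intro h; exact absurd (Finset.mem_univ _) h
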